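/- If Z satisfies 𝔓(Z > 0) = 1, 0 < E[Z⁻¹] < ∞ and E[|log Z|] < ∞, then E[log(1 + S·Z)] − log(1 + S/E[Z⁻¹]) → E[log Z] + log(E[Z⁻¹]) as S → ∞, and E[log Z] + log(E[Z⁻¹]) ≥ 0. That is, the high-SNR capacity gap between rate adaptation (equivalently, optimal power and rate adaptation) and channel inversion equals E[log Z] + log(E[Z⁻¹]), which is nonnegative. -/

import Mathlib

open MeasureTheory Filter Topology

/-- **High-SNR gap between rate adaptation and channel inversion.** If `Z` satisfies
`P(Z > 0) = 1`, `0 < E[Z⁻¹] < ∞` and `E[|log Z|] < ∞`, then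
`E[log(1 + S·Z)] − log(1 + S/E[Z⁻¹]) → E[log Z] + log(E[Z⁻¹])` as `S → ∞`, and this limit is
nonnegative. -/
theorem ra_sub_ci_gap
    {Ω : Type*} [MeasurableSpace Ω] (P : Measure Ω) [IsProbabilityMeasure P]
    (Z : Ω → ℝ) (hZ : Measurable Z) (hZpos : P {ω | 0 < Z ω} = 1)
    (hinv_int : Integrable (fun ω => (Z ω)⁻¹) P)
    (hinv_pos : 0 < ∫ ω, (Z ω)⁻¹ ∂P)
    (hlog_int : Integrable (fun ω => |Real.log (Z ω)|) P) :
    Tendsto (fun S =>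
        (∫ ω, Real.log (1 + S * Z ω) ∂P) - Real.log (1 + S / ∫ ω, (Z ω)⁻¹ ∂P))
      atTop (𝓝 ((∫ ω, Real.log (Z ω) ∂P) + Real.log (∫ ω, (Z ω)⁻¹ ∂P))) ∧
    0 ≤ (∫ ω, Real.log (Z ω) ∂P) + Real.log (∫ ω, (Z ω)⁻¹ ∂P) := by
  set m : ℝ := ∫ ω, (Z ω)⁻¹ ∂P with hm
  set L : ℝ := ∫ ω, Real.log (Z ω) ∂P with hL
  -- a.e. positivity
  have hae : ∀ᵐ ω ∂P, 0 < Z ω := by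
    rw [ae_iff]
    have : {ω | ¬ 0 < Z ω} = {ω | 0 < Z ω}ᶜ := by ext ω; simp
    rw [this, measure_compl (measurableSet_lt measurable_const hZ) (measure_ne_top P _), hZpos]
    simp
  -- integrability of log Z
  have hlogZmeas : AEStronglyMeasurable (fun ω => Real.log (Z ω)) P :=
    (Real.measurable_log.comp hZ).aestronglyMeasurable
  have hlogZ_int : Integrable (fun ω => Real.log (Z ω)) P :=
    (integrable_norm_iff hlogZmeas).mp (by simpa [Real.norm_eq_abs] using hlog_int)
  have hrem_meas : ∀ S : ℝ, AEStronglyMeasurable (fun ω => Real.log (1 + (S * Z ω)⁻¹)) P :=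
    fun S => (Real.measurable_log.comp
      ((measurable_const.mul hZ).inv.const_add 1)).aestronglyMeasurable
  have hrem_int : ∀ S : ℝ, 1 ≤ S → Integrable (fun ω => Real.log (1 + (S * Z ω)⁻¹)) P := by
    intro S hS
    have hS0 : 0 < S := lt_of_lt_of_le one_pos hS
    refine Integrable.mono (hinv_int.const_mul S⁻¹) (hrem_meas S) ?_
    filter_upwards [hae] with ω hω
    have hSZ : 0 < S * Z ω := mul_pos hS0 hω
    have h1 : 0 ≤ Real.log (1 + (S * Z ω)⁻¹) :=
      Real.log_nonneg (by nlinarith [inv_nonneg.mpr hSZ.le])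
    have h2 : Real.log (1 + (S * Z ω)⁻¹) ≤ S⁻¹ * (Z ω)⁻¹ := by
      have h3 := Real.log_le_sub_one_of_pos (show (0:ℝ) < 1 + (S * Z ω)⁻¹ by positivity)
      have h4 : (S * Z ω)⁻¹ = S⁻¹ * (Z ω)⁻¹ := mul_inv _ _
      linarith
    rw [Real.norm_eq_abs, Real.norm_eq_abs, abs_of_nonneg h1,
      abs_of_nonneg (by positivity : (0:ℝ) ≤ S⁻¹ * (Z ω)⁻¹)]
    exact h2
  -- the remainder term g S = ∫ log (1 + (S * Z)⁻¹)
  have key : ∀ S : ℝ, 1 ≤ S →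
      (∫ ω, Real.log (1 + S * Z ω) ∂P)
        = L + Real.log S + ∫ ω, Real.log (1 + (S * Z ω)⁻¹) ∂P := by
    intro S hS
    have hS0 : 0 < S := lt_of_lt_of_le one_pos hS
    have heq : ∀ᵐ ω ∂P, Real.log (1 + S * Z ω)
        = Real.log (Z ω) + Real.log S + Real.log (1 + (S * Z ω)⁻¹) := by
      filter_upwards [hae] with ω hω
      have hSZ : 0 < S * Z ω := mul_pos hS0 hω
      have : 1 + S * Z ω = Z ω * S * (1 + (S * Z ω)⁻¹) := by
        field_simp; ring
      rw [this, Real.log_mul (by positivity) (by positivity),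
        Real.log_mul (ne_of_gt hω) (ne_of_gt hS0)]
    rw [integral_congr_ae heq,
      integral_add (f := fun ω => Real.log (Z ω) + Real.log S)
        (hlogZ_int.add (integrable_const _)) (hrem_int S hS),
      integral_add hlogZ_int (integrable_const _)]
    simp [hL]
  -- m/S bound on remainder
  have hg0 : Tendsto (fun S : ℝ => ∫ ω, Real.log (1 + (S * Z ω)⁻¹) ∂P) atTop (𝓝 0) := by
    have hub : ∀ᶠ S : ℝ in atTop, ∫ ω, Real.log (1 + (S * Z ω)⁻¹) ∂P ≤ S⁻¹ * m := by
      filter_upwards [eventually_ge_atTop 1] with S hS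
      have hS0 : 0 < S := lt_of_lt_of_le one_pos hS
      have h := integral_mono_ae (f := fun ω => Real.log (1 + (S * Z ω)⁻¹))
        (g := fun ω => S⁻¹ * (Z ω)⁻¹) (hrem_int S hS) (hinv_int.const_mul S⁻¹) ?_
      · calc (∫ ω, Real.log (1 + (S * Z ω)⁻¹) ∂P) ≤ ∫ ω, S⁻¹ * (Z ω)⁻¹ ∂P := h
          _ = S⁻¹ * m := by rw [integral_const_mul]
      · filter_upwards [hae] with ω hω
        have hSZ : 0 < S * Z ω := mul_pos hS0 hω
        have h3 := Real.log_le_sub_one_of_pos (show (0:ℝ) < 1 + (S * Z ω)⁻¹ by positivity)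
        have h4 : (S * Z ω)⁻¹ = S⁻¹ * (Z ω)⁻¹ := mul_inv _ _
        show Real.log (1 + (S * Z ω)⁻¹) ≤ S⁻¹ * (Z ω)⁻¹
        linarith
    have hlb : ∀ᶠ S : ℝ in atTop, (0:ℝ) ≤ ∫ ω, Real.log (1 + (S * Z ω)⁻¹) ∂P := by
      filter_upwards [eventually_ge_atTop 1] with S hS
      have hS0 : 0 < S := lt_of_lt_of_le one_pos hS
      refine integral_nonneg_of_ae ?_
      filter_upwards [hae] with ω hω
      have hSZ : 0 < S * Z ω := mul_pos hS0 hω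
      exact Real.log_nonneg (by nlinarith [inv_nonneg.mpr hSZ.le])
    have hub0 : Tendsto (fun S : ℝ => S⁻¹ * m) atTop (𝓝 0) := by
      simpa using tendsto_inv_atTop_zero.mul_const m
    exact tendsto_of_tendsto_of_tendsto_of_le_of_le' tendsto_const_nhds hub0 hlb hub
  constructor
  · -- the limit
    have hlog1 : Tendsto (fun S : ℝ => Real.log (1 + m / S)) atTop (𝓝 0) := by
      have h1 : Tendsto (fun S : ℝ => 1 + m / S) atTop (𝓝 1) := by
        have := tendsto_inv_atTop_zero.const_mul m
        simpa [div_eq_mul_inv] using (tendsto_const_nhds (x := (1:ℝ))).add this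
      have := (Real.continuousAt_log one_ne_zero).tendsto.comp h1
      simpa [Function.comp_def] using this
    have main : Tendsto (fun S : ℝ =>
        L + Real.log m + ((∫ ω, Real.log (1 + (S * Z ω)⁻¹) ∂P) - Real.log (1 + m / S)))
        atTop (𝓝 (L + Real.log m)) := by
      simpa using tendsto_const_nhds.add (hg0.sub hlog1)
    refine main.congr' ?_
    filter_upwards [eventually_ge_atTop 1] with S hS
    have hS0 : 0 < S := lt_of_lt_of_le one_pos hS
    have hB : Real.log (1 + S / m) = Real.log S - Real.log m + Real.log (1 + m / S) := by
      have : 1 + S / m = S / m * (1 + m / S) := by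
        field_simp
        ring
      rw [this, Real.log_mul (by positivity) (by positivity),
        Real.log_div (ne_of_gt hS0) (ne_of_gt hinv_pos)]
    rw [key S hS, hB]
    ring
  · -- Jensen
    have hjen := convexOn_exp.map_integral_le (μ := P)
      (f := fun ω => -Real.log (Z ω)) Real.continuous_exp.continuousOn isClosed_univ
      (Eventually.of_forall fun _ => trivial) hlogZ_int.neg ?_
    · have heq : (∫ ω, Real.exp (-Real.log (Z ω)) ∂P) = m := by
        refine integral_congr_ae ?_
        filter_upwards [hae] with ω hω
        rw [Real.exp_neg, Real.exp_log hω]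
      rw [integral_neg] at hjen
      have : Real.exp (-L) ≤ m := by
        calc Real.exp (-L) ≤ ∫ ω, Real.exp (-Real.log (Z ω)) ∂P := hjen
          _ = m := heq
      have := (Real.le_log_iff_exp_le hinv_pos).mpr this
      linarith
    · refine (integrable_congr ?_).mpr hinv_int
      filter_upwards [hae] with ω hω
      simp only [Function.comp]
      rw [Real.exp_neg, Real.exp_log hω]
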